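/- The increments (T_{d+1} − T_d − Δ)_{d≥1} form an i.i.d. sequence of exponential random variables with rate λ_h. -/

import Mathlib

open MeasureTheory ProbabilityTheory Filter

namespace HonestTree

/-- Honest arrival times `τ_i = Y_1 + ⋯ + Y_i` (as `Y 0 + ⋯ + Y (i-1)`). -/
def tau {Ω : Type*} (Y : ℕ → Ω → ℝ) (i : ℕ) (ω : Ω) : ℝ :=
  ∑ j ∈ Finset.range i, Y j ω

end HonestTree

open HonestTree

open Set Real
open scoped ENNReal NNReal


def Gset {Ω : Type*} (Y : ℕ → Ω → ℝ) : Set Ω :=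
  {ω | (∀ i, 0 < Y i ω) ∧ ∀ M : ℕ, ∃ i, (M : ℝ) < tau Y i ω}

section Defs
variable {Ω : Type*}

/-- Sum of `k` interarrival variables starting at index `m`. -/
noncomputable def Ssum (Y : ℕ → Ω → ℝ) (m k : ℕ) (ω : Ω) : ℝ :=
  ∑ j ∈ Finset.range k, Y (m + j) ω

/-- First `k ≥ 1` with `Ssum Y m k ω > Δ` (0 if none). -/
noncomputable def Kidx (Y : ℕ → Ω → ℝ) (Δ : ℝ) (m : ℕ) (ω : Ω) : ℕ :=
  sInf {k | 1 ≤ k ∧ Δ < Ssum Y m k ω}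

noncomputable def Nidx (Y : ℕ → Ω → ℝ) (Δ : ℝ) : ℕ → Ω → ℕ
  | 0 => fun _ => 1
  | d + 1 => fun ω => Nidx Y Δ d ω + Kidx Y Δ (Nidx Y Δ d ω) ω

noncomputable def Xinc (Y : ℕ → Ω → ℝ) (Δ : ℝ) (d : ℕ) (ω : Ω) : ℝ :=
  Ssum Y (Nidx Y Δ d ω) (Kidx Y Δ (Nidx Y Δ d ω) ω) ω - Δ

noncomputable def vecY (Y : ℕ → Ω → ℝ) (m k : ℕ) (ω : Ω) : Fin k → ℝ :=
  fun j => Y (m + j) ω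

noncomputable def psum {k : ℕ} (v : Fin k → ℝ) (j : ℕ) : ℝ :=
  ∑ i ∈ Finset.range j, if h : i < k then v ⟨i, h⟩ else 0

def Dset (Δ : ℝ) (k : ℕ) (A : Set ℝ) : Set (Fin k → ℝ) :=
  {v | Δ < psum v k ∧ (∀ j, 1 ≤ j → j < k → psum v j ≤ Δ) ∧ psum v k - Δ ∈ A}
end Defs

section Basic
variable {Ω : Type*} {Y : ℕ → Ω → ℝ} {Δ : ℝ} {k m : ℕ} {ω : Ω}

lemma psum_vecY' {j : ℕ} (hj : j ≤ k) : psum (vecY Y m k ω) j = Ssum Y m j ω := by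
  unfold psum vecY Ssum
  refine Finset.sum_congr rfl fun i hi => ?_
  rw [dif_pos (lt_of_lt_of_le (Finset.mem_range.1 hi) hj)]

lemma psum_self (v : Fin k → ℝ) : psum v k = ∑ i, v i := by
  rw [psum, ← Fin.sum_univ_eq_sum_range (fun i => if h : i < k then v ⟨i, h⟩ else 0) k]
  exact Finset.sum_congr rfl fun i _ => by simp [i.isLt]

lemma Kidx_eq_iff_of_pos (hk : 1 ≤ k) :
    Kidx Y Δ m ω = k ↔ (Δ < Ssum Y m k ω ∧ ∀ j, 1 ≤ j → j < k → Ssum Y m j ω ≤ Δ) := by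
  constructor
  · intro h
    have hne : {j | 1 ≤ j ∧ Δ < Ssum Y m j ω}.Nonempty := by
      by_contra hemp
      rw [Set.not_nonempty_iff_eq_empty] at hemp
      rw [Kidx, hemp, Nat.sInf_empty] at h
      omega
    have hmem := Nat.sInf_mem hne
    rw [Kidx] at h
    rw [h] at hmem
    refine ⟨hmem.2, fun j h1j hjk => ?_⟩
    by_contra hgt
    exact Nat.notMem_of_lt_sInf (h ▸ hjk) (Set.mem_setOf.2 ⟨h1j, lt_of_not_ge hgt⟩)
  · rintro ⟨hky, hmin⟩
    refine le_antisymm (Nat.sInf_le (Set.mem_setOf.2 ⟨hk, hky⟩)) ?_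
    by_contra hlt
    push_neg at hlt
    have hmem := Nat.sInf_mem (⟨k, Set.mem_setOf.2 ⟨hk, hky⟩⟩ : {j | 1 ≤ j ∧ Δ < Ssum Y m j ω}.Nonempty)
    exact absurd hmem.2 (not_lt.2 (hmin _ hmem.1 hlt))

lemma vecY_mem_Dset_iff (hk : 1 ≤ k) (A : Set ℝ) :
    vecY Y m k ω ∈ Dset Δ k A ↔
      (Kidx Y Δ m ω = k ∧ Ssum Y m k ω - Δ ∈ A) := by
  rw [Kidx_eq_iff_of_pos hk]
  simp only [Dset, Set.mem_setOf_eq, psum_vecY' (le_refl k)]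
  constructor
  · rintro ⟨h1, h2, h3⟩
    exact ⟨⟨h1, fun j hj hjk => by simpa [psum_vecY' (le_of_lt hjk)] using h2 j hj hjk⟩, h3⟩
  · rintro ⟨⟨h1, h2⟩, h3⟩
    exact ⟨h1, fun j hj hjk => by rw [psum_vecY' (le_of_lt hjk)]; exact h2 j hj hjk, h3⟩

end Basic

section PsumMeas

lemma measurable_psum {k : ℕ} (j : ℕ) : Measurable (fun v : Fin k → ℝ => psum v j) := by
  apply Finset.measurable_sum
  intro i _
  by_cases h : i < k
  · simpa [h] using measurable_pi_apply (⟨i, h⟩ : Fin k)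
  · simp [h]

lemma measurableSet_Dset {Δ : ℝ} {k : ℕ} {A : Set ℝ} (hA : MeasurableSet A) :
    MeasurableSet (Dset Δ k A) := by
  have h1 : MeasurableSet {v : Fin k → ℝ | Δ < psum v k} :=
    measurable_psum k measurableSet_Ioi
  have h3 : MeasurableSet {v : Fin k → ℝ | psum v k - Δ ∈ A} :=
    ((measurable_psum k).sub measurable_const) hA
  have h2 : MeasurableSet {v : Fin k → ℝ | ∀ j, 1 ≤ j → j < k → psum v j ≤ Δ} := by
    rw [Set.setOf_forall]
    refine MeasurableSet.iInter fun j => ?_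
    by_cases hc : 1 ≤ j ∧ j < k
    · have : {v : Fin k → ℝ | 1 ≤ j → j < k → psum v j ≤ Δ} = {v | psum v j ≤ Δ} := by
        ext v; simp [hc.1, hc.2]
      rw [this]
      exact measurableSet_le (measurable_psum j) measurable_const
    · have : {v : Fin k → ℝ | 1 ≤ j → j < k → psum v j ≤ Δ} = Set.univ := by
        ext v
        simp only [Set.mem_setOf_eq, Set.mem_univ, iff_true]
        intro h1' h2'
        exact absurd (And.intro h1' h2') hc
      rw [this]
      exact MeasurableSet.univ
  have : Dset Δ k A = _ ∩ (_ ∩ _) := rfl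
  exact (h1.inter (h2.inter h3))

end PsumMeas

section Meas
variable {Ω : Type*} [MeasurableSpace Ω] {Y : ℕ → Ω → ℝ} {Δ : ℝ}
  (hmeas : ∀ i, Measurable (Y i))

include hmeas

lemma measurable_Ssum (m k : ℕ) : Measurable (Ssum Y m k) :=
  Finset.measurable_sum _ fun j _ => hmeas (m + j)

lemma measurable_vecY (m k : ℕ) : Measurable (vecY Y m k) :=
  measurable_pi_lambda _ fun j => hmeas (m + (j : ℕ))

lemma measurable_Kidx (m : ℕ) : Measurable (Kidx Y Δ m) := by
  apply measurable_to_countable'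
  intro k
  rcases Nat.eq_zero_or_pos k with hk | hk
  · subst hk
    have heq : Kidx Y Δ m ⁻¹' {0} = ⋂ j, {ω | 1 ≤ j → Ssum Y m j ω ≤ Δ} := by
      ext ω
      simp only [Set.mem_preimage, Set.mem_singleton_iff, Set.mem_iInter, Set.mem_setOf_eq]
      constructor
      · intro h j hj
        by_contra hgt
        have hne : {j | 1 ≤ j ∧ Δ < Ssum Y m j ω}.Nonempty :=
          ⟨j, Set.mem_setOf.2 ⟨hj, lt_of_not_ge hgt⟩⟩
        have hmem := Nat.sInf_mem hne
        rw [Kidx] at h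
        rw [h] at hmem
        exact absurd hmem.1 (by omega)
      · intro h
        rw [Kidx, Nat.sInf_eq_zero]
        right
        ext j
        simp only [Set.mem_setOf_eq, Set.mem_empty_iff_false, iff_false, not_and, not_lt]
        exact h j
    rw [heq]
    refine MeasurableSet.iInter fun j => ?_
    by_cases h1 : 1 ≤ j
    · have : {ω | 1 ≤ j → Ssum Y m j ω ≤ Δ} = {ω | Ssum Y m j ω ≤ Δ} := by ext ω; simp [h1]
      rw [this]
      exact measurableSet_le (measurable_Ssum hmeas m j) measurable_const
    · have : {ω | 1 ≤ j → Ssum Y m j ω ≤ Δ} = Set.univ := by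
        ext ω; simp only [Set.mem_setOf_eq, Set.mem_univ, iff_true]; exact fun h => absurd h h1
      rw [this]
      exact MeasurableSet.univ
  · have heq : Kidx Y Δ m ⁻¹' {k} =
        {ω | Δ < Ssum Y m k ω} ∩ ⋂ j, {ω | 1 ≤ j → j < k → Ssum Y m j ω ≤ Δ} := by
      ext ω
      simp only [Set.mem_preimage, Set.mem_singleton_iff, Set.mem_inter_iff, Set.mem_setOf_eq,
        Set.mem_iInter]
      exact Kidx_eq_iff_of_pos hk
    rw [heq]
    refine ((measurable_Ssum hmeas m k) measurableSet_Ioi).inter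
      (MeasurableSet.iInter fun j => ?_)
    by_cases hc : 1 ≤ j ∧ j < k
    · have : {ω | 1 ≤ j → j < k → Ssum Y m j ω ≤ Δ} = {ω | Ssum Y m j ω ≤ Δ} := by
        ext ω; simp [hc.1, hc.2]
      rw [this]
      exact measurableSet_le (measurable_Ssum hmeas m j) measurable_const
    · have : {ω | 1 ≤ j → j < k → Ssum Y m j ω ≤ Δ} = Set.univ := by
        ext ω
        simp only [Set.mem_setOf_eq, Set.mem_univ, iff_true]
        intro h1' h2'
        exact absurd (And.intro h1' h2') hc
      rw [this]
      exact MeasurableSet.univ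

lemma measurable_Nidx (d : ℕ) : Measurable (Nidx Y Δ d) := by
  induction d with
  | zero => exact measurable_const
  | succ d ih =>
    apply measurable_to_countable'
    intro m'
    have heq : Nidx Y Δ (d + 1) ⁻¹' {m'} =
        ⋃ m : ℕ, (Nidx Y Δ d ⁻¹' {m}) ∩ (Kidx Y Δ m ⁻¹' {n | m + n = m'}) := by
      ext ω
      simp only [Set.mem_preimage, Set.mem_singleton_iff, Set.mem_iUnion, Set.mem_inter_iff,
        Set.mem_setOf_eq, Nidx]
      constructor
      · intro h; exact ⟨Nidx Y Δ d ω, rfl, h⟩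
      · rintro ⟨m, h1, h2⟩; rw [h1]; exact h2
    rw [heq]
    exact MeasurableSet.iUnion fun m =>
      (ih (measurableSet_singleton m)).inter
        ((measurable_Kidx hmeas m) (Set.to_countable _).measurableSet)

lemma measurable_Xinc (d : ℕ) : Measurable (Xinc Y Δ d) := by
  intro B hB
  have heq : Xinc Y Δ d ⁻¹' B =
      ⋃ m : ℕ, ⋃ k : ℕ, (Nidx Y Δ d ⁻¹' {m}) ∩ (Kidx Y Δ m ⁻¹' {k}) ∩
        {ω | Ssum Y m k ω - Δ ∈ B} := by
    ext ω
    simp only [Set.mem_preimage, Set.mem_iUnion, Set.mem_inter_iff, Set.mem_singleton_iff,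
      Set.mem_setOf_eq, Xinc]
    constructor
    · intro h
      exact ⟨Nidx Y Δ d ω, Kidx Y Δ (Nidx Y Δ d ω) ω, ⟨rfl, rfl⟩, h⟩
    · rintro ⟨m, k, ⟨h1, h2⟩, h3⟩
      rw [h1, h2]; exact h3
  rw [heq]
  refine MeasurableSet.iUnion fun m => MeasurableSet.iUnion fun k =>
    (((measurable_Nidx hmeas d) (measurableSet_singleton m)).inter
      ((measurable_Kidx hmeas m) (measurableSet_singleton k))).inter ?_
  exact ((measurable_Ssum hmeas m k).sub measurable_const) hB

end Meas

section ExpFacts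
variable {r : ℝ}

lemma expMeasure_apply' (r : ℝ) {s : Set ℝ} (hs : MeasurableSet s) :
    expMeasure r s = ∫⁻ x in s, exponentialPDF r x := by
  rw [expMeasure, gammaMeasure, withDensity_apply _ hs]
  rfl

lemma expMeasure_Iic (hr : 0 < r) (x : ℝ) :
    expMeasure r (Set.Iic x) = ENNReal.ofReal (if 0 ≤ x then 1 - rexp (-(r * x)) else 0) := by
  rw [expMeasure_apply' r measurableSet_Iic]
  exact lintegral_exponentialPDF_eq_antiDeriv hr x

lemma expMeasure_Iic_zero (hr : 0 < r) : expMeasure r (Set.Iic 0) = 0 := by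
  rw [expMeasure_Iic hr 0]
  simp

lemma expMeasure_inter_Ioi (hr : 0 < r) {A : Set ℝ} (hA : MeasurableSet A) :
    expMeasure r (A ∩ Set.Ioi 0) = expMeasure r A :=
  measure_inter_conull (by rw [compl_Ioi]; exact expMeasure_Iic_zero hr)

lemma expMeasure_memoryless (hr : 0 < r) {t : ℝ} (ht : 0 ≤ t) {A : Set ℝ}
    (hA : MeasurableSet A) :
    expMeasure r {y | t < y ∧ y - t ∈ A} = ENNReal.ofReal (rexp (-(r * t))) * expMeasure r A := by
  have hSeq : {y | t < y ∧ y - t ∈ A} = (fun y => y - t) ⁻¹' (Set.Ioi 0 ∩ A) := by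
    ext y
    simp only [Set.mem_setOf_eq, Set.mem_preimage, Set.mem_inter_iff, Set.mem_Ioi]
    constructor
    · rintro ⟨h1, h2⟩; exact ⟨by linarith, h2⟩
    · rintro ⟨h1, h2⟩; exact ⟨by linarith, h2⟩
  have hSm : MeasurableSet {y | t < y ∧ y - t ∈ A} := by
    rw [hSeq]; exact (measurable_id.sub measurable_const) (measurableSet_Ioi.inter hA)
  have hpdfmeas : Measurable (exponentialPDF r) := by
    unfold exponentialPDF
    exact (measurable_exponentialPDFReal r).ennreal_ofReal
  rw [expMeasure_apply' r hSm, ← lintegral_indicator hSm]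
  set F : ℝ → ℝ≥0∞ := (Set.Ioi 0 ∩ A).indicator (fun x => exponentialPDF r (x + t)) with hF
  have hpt : ∀ y, Set.indicator {y | t < y ∧ y - t ∈ A} (exponentialPDF r) y = F (y - t) := by
    intro y
    by_cases hy : y ∈ {y | t < y ∧ y - t ∈ A}
    · have hy' : y - t ∈ Set.Ioi 0 ∩ A := by
        have := hSeq ▸ hy
        exact this
      rw [Set.indicator_of_mem hy, hF, Set.indicator_of_mem hy']
      simp
    · rw [Set.indicator_of_notMem hy, hF,
        Set.indicator_of_notMem (by rw [hSeq] at hy; exact hy)]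
  have hFmeas : Measurable F :=
    (hpdfmeas.comp (measurable_id.add_const t)).indicator (measurableSet_Ioi.inter hA)
  calc ∫⁻ y, Set.indicator {y | t < y ∧ y - t ∈ A} (exponentialPDF r) y
      = ∫⁻ y, F (y - t) := by exact lintegral_congr hpt
    _ = ∫⁻ x, F x := by
        simpa [sub_eq_add_neg] using
          (measurePreserving_add_right (volume : Measure ℝ) (-t)).lintegral_comp hFmeas
    _ = ∫⁻ x in Set.Ioi 0 ∩ A, exponentialPDF r (x + t) := by
        rw [hF, lintegral_indicator (measurableSet_Ioi.inter hA)]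
    _ = ∫⁻ x in Set.Ioi 0 ∩ A, ENNReal.ofReal (rexp (-(r * t))) * exponentialPDF r x := by
        refine setLIntegral_congr_fun (measurableSet_Ioi.inter hA) ?_
        intro x hx
        have hx0 : (0:ℝ) < x := hx.1
        beta_reduce
        rw [exponentialPDF_of_nonneg (by linarith), exponentialPDF_of_nonneg (le_of_lt hx0),
          ← ENNReal.ofReal_mul (by positivity)]
        congr 1
        rw [mul_comm (rexp (-(r*t))), mul_assoc, ← Real.exp_add]
        ring_nf
    _ = ENNReal.ofReal (rexp (-(r * t))) * ∫⁻ x in Set.Ioi 0 ∩ A, exponentialPDF r x :=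
        lintegral_const_mul _ hpdfmeas
    _ = ENNReal.ofReal (rexp (-(r * t))) * expMeasure r A := by
        rw [← expMeasure_apply' r (measurableSet_Ioi.inter hA), Set.inter_comm,
          expMeasure_inter_Ioi hr hA]

end ExpFacts

section Prob
variable {Ω : Type*} [MeasurableSpace Ω] {P : Measure Ω} [IsProbabilityMeasure P]
  {lambda_h : ℝ} {Δ : ℝ} {Y : ℕ → Ω → ℝ}

lemma measurable_tau (hmeas : ∀ i, Measurable (Y i)) (i : ℕ) : Measurable (tau Y i) :=
  Finset.measurable_sum _ fun j _ => hmeas j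

lemma measurableSet_Gset (hmeas : ∀ i, Measurable (Y i)) : MeasurableSet (Gset Y) := by
  have h1 : MeasurableSet {ω | ∀ i, 0 < Y i ω} := by
    rw [Set.setOf_forall]
    exact MeasurableSet.iInter fun i => (hmeas i) measurableSet_Ioi
  have h2 : MeasurableSet {ω | ∀ M : ℕ, ∃ i, (M : ℝ) < tau Y i ω} := by
    rw [Set.setOf_forall]
    refine MeasurableSet.iInter fun M => ?_
    rw [Set.setOf_exists]
    exact MeasurableSet.iUnion fun i => (measurable_tau hmeas i) measurableSet_Ioi
  exact h1.inter h2

lemma law_vecY (hlh : 0 < lambda_h) (hmeas : ∀ i, Measurable (Y i))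
    (hdist : ∀ i, P.map (Y i) = expMeasure lambda_h)
    (hindep : iIndepFun Y P) (m k : ℕ) :
    P.map (vecY Y m k) = Measure.pi (fun _ : Fin k => expMeasure lambda_h) := by
  haveI : IsProbabilityMeasure (expMeasure lambda_h) := isProbabilityMeasure_expMeasure hlh
  refine (Measure.pi_eq fun s hs => ?_).symm
  rw [Measure.map_apply (measurable_vecY hmeas m k) (MeasurableSet.univ_pi hs)]
  classical
  set sets : ℕ → Set ℝ := fun i => if h : i - m < k ∧ m ≤ i then s ⟨i - m, h.1⟩ else Set.univ
    with hsets
  have hsets_eq : ∀ j : Fin k, sets (m + (j : ℕ)) = s j := by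
    intro j
    have h1 : m + (j : ℕ) - m = (j : ℕ) := by omega
    have h2 : (m + (j : ℕ) - m < k ∧ m ≤ m + (j : ℕ)) := by
      constructor
      · rw [h1]; exact j.isLt
      · omega
    rw [hsets]
    simp only [dif_pos h2]
    have h3 : (⟨m + (j : ℕ) - m, h2.1⟩ : Fin k) = j := by
      rw [Fin.ext_iff]
      exact h1
    rw [h3]
  have hpre : vecY Y m k ⁻¹' Set.pi Set.univ s = ⋂ j : Fin k, Y (m + (j : ℕ)) ⁻¹' s j := by
    ext ω
    simp [vecY, Set.mem_pi]
  have hmain := hindep.measure_inter_preimage_eq_mul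
    (Finset.image (fun j : Fin k => m + (j : ℕ)) Finset.univ) (sets := sets)
    (fun i _ => by
      rw [hsets]
      by_cases h : i - m < k ∧ m ≤ i
      · simp only [dif_pos h]; exact hs _
      · simp only [dif_neg h]; exact MeasurableSet.univ)
  have hinj : Function.Injective (fun j : Fin k => m + (j : ℕ)) := by
    intro x y hxy
    simp only [add_right_inj] at hxy
    exact Fin.val_injective hxy
  rw [Finset.set_biInter_finset_image, Finset.prod_image (fun x _ y _ h => hinj h)] at hmain
  simp only [hsets_eq] at hmain
  have huniv : (⋂ y ∈ (Finset.univ : Finset (Fin k)), Y (m + (y : ℕ)) ⁻¹' s y)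
      = ⋂ j : Fin k, Y (m + (j : ℕ)) ⁻¹' s j := by simp
  rw [huniv] at hmain
  rw [hpre, hmain]
  refine Finset.prod_congr rfl fun j _ => ?_
  rw [← Measure.map_apply (hmeas _) (hs j), hdist]

lemma P_vecY (hlh : 0 < lambda_h) (hmeas : ∀ i, Measurable (Y i))
    (hdist : ∀ i, P.map (Y i) = expMeasure lambda_h)
    (hindep : iIndepFun Y P) (m k : ℕ)
    {C : Set (Fin k → ℝ)} (hC : MeasurableSet C) :
    P (vecY Y m k ⁻¹' C) = Measure.pi (fun _ : Fin k => expMeasure lambda_h) C := by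
  rw [← law_vecY hlh hmeas hdist hindep m k, Measure.map_apply (measurable_vecY hmeas m k) hC]

lemma vecY_indep (hmeas : ∀ i, Measurable (Y i))
    (hindep : iIndepFun Y P) {m a m' : ℕ} (b : ℕ) (h : m + a ≤ m') :
    IndepFun (vecY Y m a) (vecY Y m' b) P := by
  classical
  set S : Finset ℕ := Finset.image (fun j : Fin a => m + (j : ℕ)) Finset.univ with hS
  set T : Finset ℕ := Finset.image (fun j : Fin b => m' + (j : ℕ)) Finset.univ with hT
  have hST : Disjoint S T := by
    rw [Finset.disjoint_left]
    intro i hiS hiT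
    simp only [hS, hT, Finset.mem_image, Finset.mem_univ, true_and] at hiS hiT
    obtain ⟨j, hj⟩ := hiS
    obtain ⟨j', hj'⟩ := hiT
    have := j.isLt
    omega
  have base := hindep.indepFun_finset S T hST hmeas
  have hφ : Measurable (fun (g : (i : S) → ℝ) (j : Fin a) =>
      g ⟨m + (j : ℕ), by rw [hS]; exact Finset.mem_image.2 ⟨j, Finset.mem_univ j, rfl⟩⟩) :=
    measurable_pi_lambda _ fun j => measurable_pi_apply _
  have hψ : Measurable (fun (g : (i : T) → ℝ) (j : Fin b) =>
      g ⟨m' + (j : ℕ), by rw [hT]; exact Finset.mem_image.2 ⟨j, Finset.mem_univ j, rfl⟩⟩) :=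
    measurable_pi_lambda _ fun j => measurable_pi_apply _
  exact base.comp hφ hψ

lemma Gset_ae_one (hlh : 0 < lambda_h) (hmeas : ∀ i, Measurable (Y i))
    (hdist : ∀ i, P.map (Y i) = expMeasure lambda_h)
    (hindep : iIndepFun Y P) :
    P (Gset Y) = 1 := by
  haveI : IsProbabilityMeasure (expMeasure lambda_h) := isProbabilityMeasure_expMeasure hlh
  have hpos : ∀ᵐ ω ∂P, ∀ i, 0 < Y i ω := by
    rw [ae_all_iff]
    intro i
    rw [ae_iff]
    have : {ω | ¬ 0 < Y i ω} = Y i ⁻¹' Set.Iic 0 := by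
      ext ω; simp [not_lt]
    rw [this, ← Measure.map_apply (hmeas i) measurableSet_Iic, hdist i,
      expMeasure_Iic_zero hlh]
  have hub : ∀ M : ℕ, ∀ᵐ ω ∂P, (∀ i, 0 < Y i ω) → ∃ i, (M : ℝ) < tau Y i ω := by
    intro M
    rw [ae_iff]
    set B := {ω | ¬((∀ i, 0 < Y i ω) → ∃ i, (M : ℝ) < tau Y i ω)} with hB
    have hBsub : ∀ n : ℕ, B ⊆ ⋂ j ∈ Finset.range n, Y j ⁻¹' Set.Iic (M : ℝ) := by
      intro n ω hω
      rw [hB] at hω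
      simp only [Set.mem_setOf_eq, not_forall, not_exists, not_lt] at hω
      obtain ⟨hposω, htau⟩ := hω
      simp only [Set.mem_iInter, Set.mem_preimage, Set.mem_Iic]
      intro j _
      have h1 : tau Y j ω ≥ 0 := Finset.sum_nonneg fun i _ => le_of_lt (hposω i)
      have h2 : tau Y (j + 1) ω = tau Y j ω + Y j ω := Finset.sum_range_succ _ _
      have h3 := htau (j + 1)
      linarith
    have hlt1 : expMeasure lambda_h (Set.Iic (M : ℝ)) < 1 := by
      rw [expMeasure_Iic hlh, if_pos (by positivity)]
      have h1 := Real.exp_pos (-(lambda_h * M))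
      have h2 : rexp (-(lambda_h * M)) ≤ 1 :=
        Real.exp_le_one_iff.2 (neg_nonpos.2 (by positivity))
      calc ENNReal.ofReal (1 - rexp (-(lambda_h * M))) < ENNReal.ofReal 1 :=
            (ENNReal.ofReal_lt_ofReal_iff_of_nonneg (by linarith)).2 (by linarith)
        _ = 1 := ENNReal.ofReal_one
    have hCn : ∀ n : ℕ, P (⋂ j ∈ Finset.range n, Y j ⁻¹' Set.Iic (M : ℝ))
        = (expMeasure lambda_h (Set.Iic (M : ℝ))) ^ n := by
      intro n
      have hm := hindep.measure_inter_preimage_eq_mul (Finset.range n)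
        (sets := fun _ => Set.Iic (M : ℝ)) (fun i _ => measurableSet_Iic)
      rw [hm]
      have : ∀ j ∈ Finset.range n, P (Y j ⁻¹' Set.Iic (M : ℝ))
          = expMeasure lambda_h (Set.Iic (M : ℝ)) := fun j _ => by
        rw [← Measure.map_apply (hmeas j) measurableSet_Iic, hdist j]
      rw [Finset.prod_congr rfl this, Finset.prod_const, Finset.card_range]
    have hB0 : P B ≤ 0 := by
      have htend := ENNReal.tendsto_pow_atTop_nhds_zero_of_lt_one hlt1
      refine ge_of_tendsto' htend fun n => ?_
      rw [← hCn n]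
      exact measure_mono (hBsub n)
    exact le_antisymm hB0 zero_le
  have hG : ∀ᵐ ω ∂P, ω ∈ Gset Y := by
    filter_upwards [hpos, ae_all_iff.2 hub] with ω h1 h2
    exact ⟨h1, fun M => h2 M h1⟩
  have hcompl : P (Gset Y)ᶜ = 0 := by
    rw [ae_iff] at hG
    exact hG
  rw [measure_congr (ae_eq_univ.2 hcompl), measure_univ]

end Prob

section Struct
variable {Ω : Type*} {Y : ℕ → Ω → ℝ} {Δ : ℝ} {ω : Ω}

lemma tau_add (m k : ℕ) : tau Y (m + k) ω = tau Y m ω + Ssum Y m k ω := by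
  induction k with
  | zero => simp [Ssum, tau]
  | succ k ih =>
    have h1 : tau Y (m + (k + 1)) ω = tau Y (m + k) ω + Y (m + k) ω := by
      show (∑ j ∈ Finset.range (m + k + 1), Y j ω) = _
      rw [Finset.sum_range_succ]
      rfl
    have h2 : Ssum Y m (k + 1) ω = Ssum Y m k ω + Y (m + k) ω := Finset.sum_range_succ _ _
    rw [h1, ih, h2]
    ring

lemma Ssum_nonneg (hpos : ∀ i, 0 < Y i ω) (m k : ℕ) : 0 ≤ Ssum Y m k ω :=
  Finset.sum_nonneg fun i _ => le_of_lt (hpos (m + i))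

lemma tau_mono (hpos : ∀ i, 0 < Y i ω) {i i' : ℕ} (h : i ≤ i') : tau Y i ω ≤ tau Y i' ω := by
  obtain ⟨t, rfl⟩ := Nat.exists_eq_add_of_le h
  rw [tau_add]
  have := Ssum_nonneg hpos i t
  linarith

lemma Kidx_spec (hω : ω ∈ Gset Y) (hΔ : 0 ≤ Δ) (m : ℕ) :
    1 ≤ Kidx Y Δ m ω ∧ Δ < Ssum Y m (Kidx Y Δ m ω) ω ∧
      (∀ j, 1 ≤ j → j < Kidx Y Δ m ω → Ssum Y m j ω ≤ Δ) := by
  obtain ⟨hpos, hub⟩ := hω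
  obtain ⟨M, hM⟩ := exists_nat_ge (tau Y m ω + Δ)
  obtain ⟨i, hi⟩ := hub M
  have him : m < i := by
    by_contra hle
    push_neg at hle
    have := tau_mono hpos hle
    linarith
  obtain ⟨k, rfl⟩ := Nat.exists_eq_add_of_lt him
  have hSk : Δ < Ssum Y m (k + 1) ω := by
    have htadd : tau Y (m + k + 1) ω = tau Y m ω + Ssum Y m (k + 1) ω := tau_add m (k + 1)
    linarith
  have hne : {j | 1 ≤ j ∧ Δ < Ssum Y m j ω}.Nonempty :=
    ⟨k + 1, Set.mem_setOf.2 ⟨by omega, hSk⟩⟩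
  have hmem := Nat.sInf_mem hne
  refine ⟨hmem.1, hmem.2, fun j h1j hjK => ?_⟩
  by_contra hgt
  have hjmem : j ∈ {j | 1 ≤ j ∧ Δ < Ssum Y m j ω} := ⟨h1j, lt_of_not_ge hgt⟩
  have h5 : Kidx Y Δ m ω ≤ j := Nat.sInf_le hjmem
  omega

lemma Nidx_pos (d : ℕ) : 1 ≤ Nidx Y Δ d ω := by
  induction d with
  | zero => exact le_refl 1
  | succ d ih => calc 1 ≤ Nidx Y Δ d ω := ih
                  _ ≤ _ := Nat.le_add_right _ _

lemma T_eq_tau_Nidx {T : ℕ → Ω → ℝ}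
    (hT1 : ∀ ω, T 1 ω = tau Y 1 ω)
    (hTrec : ∀ d : ℕ, 1 ≤ d → ∀ ω,
      T (d + 1) ω = sInf {x : ℝ | ∃ i : ℕ, 1 ≤ i ∧ x = tau Y i ω ∧ T d ω + Δ < x})
    (hΔ : 0 ≤ Δ) (hω : ω ∈ Gset Y) :
    ∀ d, T (d + 1) ω = tau Y (Nidx Y Δ d ω) ω := by
  intro d
  induction d with
  | zero => exact hT1 ω
  | succ d ih =>
    have hpos := hω.1
    set m := Nidx Y Δ d ω with hm
    set K := Kidx Y Δ m ω with hK
    obtain ⟨hK1, hKgt, hKmin⟩ := Kidx_spec hω hΔ m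
    have hrec := hTrec (d + 1) (by omega) ω
    rw [ih] at hrec
    have hleast : IsLeast {x : ℝ | ∃ i : ℕ, 1 ≤ i ∧ x = tau Y i ω ∧ tau Y m ω + Δ < x}
        (tau Y (m + K) ω) := by
      constructor
      · refine ⟨m + K, by omega, rfl, ?_⟩
        rw [tau_add]
        linarith
      · rintro x ⟨i, hi1, rfl, hgt⟩
        have him : m < i := by
          by_contra hle
          push_neg at hle
          have := tau_mono hpos hle
          linarith
        obtain ⟨k, rfl⟩ := Nat.exists_eq_add_of_lt him
        have hKk : K ≤ k + 1 := by
          by_contra hlt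
          push_neg at hlt
          have h6 := hKmin (k + 1) (by omega) hlt
          have htadd : tau Y (m + k + 1) ω = tau Y m ω + Ssum Y m (k + 1) ω := tau_add m (k + 1)
          linarith
        exact tau_mono hpos (by omega)
    rw [hrec, hleast.csInf_eq]
    rfl

lemma Xinc_eq_T {T : ℕ → Ω → ℝ}
    (hT1 : ∀ ω, T 1 ω = tau Y 1 ω)
    (hTrec : ∀ d : ℕ, 1 ≤ d → ∀ ω,
      T (d + 1) ω = sInf {x : ℝ | ∃ i : ℕ, 1 ≤ i ∧ x = tau Y i ω ∧ T d ω + Δ < x})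
    (hΔ : 0 ≤ Δ) (hω : ω ∈ Gset Y) (d : ℕ) :
    T (d + 2) ω - T (d + 1) ω - Δ = Xinc Y Δ d ω := by
  have h1 := T_eq_tau_Nidx hT1 hTrec hΔ hω d
  have h2 := T_eq_tau_Nidx hT1 hTrec hΔ hω (d + 1)
  have h3 : Nidx Y Δ (d + 1) ω = Nidx Y Δ d ω + Kidx Y Δ (Nidx Y Δ d ω) ω := rfl
  rw [h2, h3, tau_add, h1, Xinc]
  ring

end Struct

section Core

lemma psum_zero {k : ℕ} (v : Fin k → ℝ) : psum v 0 = 0 := by simp [psum]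

lemma psum_castSucc {n : ℕ} (v : Fin (n + 1) → ℝ) {j : ℕ} (hj : j ≤ n) :
    psum v j = psum (fun i : Fin n => v i.castSucc) j := by
  unfold psum
  refine Finset.sum_congr rfl fun i hi => ?_
  have hin : i < n := lt_of_lt_of_le (Finset.mem_range.1 hi) hj
  have hin1 : i < n + 1 := by omega
  rw [dif_pos hin1, dif_pos hin]
  show v ⟨i, hin1⟩ = v (⟨i, hin⟩ : Fin n).castSucc
  congr 1

lemma psum_last {n : ℕ} (v : Fin (n + 1) → ℝ) :
    psum v (n + 1) = psum (fun i : Fin n => v i.castSucc) n + v (Fin.last n) := by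
  have h1 : psum v (n + 1) = psum v n + v ⟨n, Nat.lt_succ_self n⟩ := by
    unfold psum
    rw [Finset.sum_range_succ, dif_pos (Nat.lt_succ_self n)]
  rw [h1, psum_castSucc v (le_refl n)]
  rfl

lemma core_Dset {lambda_h Δ : ℝ} (hlh : 0 < lambda_h) (hΔ : 0 ≤ Δ) {k : ℕ} (hk : 1 ≤ k)
    {A : Set ℝ} (hA : MeasurableSet A) :
    Measure.pi (fun _ : Fin k => expMeasure lambda_h) (Dset Δ k A)
      = Measure.pi (fun _ : Fin k => expMeasure lambda_h) (Dset Δ k Set.univ)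
        * expMeasure lambda_h A := by
  haveI : IsProbabilityMeasure (expMeasure lambda_h) := isProbabilityMeasure_expMeasure hlh
  obtain ⟨n, rfl⟩ : ∃ n, k = n + 1 := ⟨k - 1, by omega⟩
  set Cset : Set (Fin n → ℝ) := {w | ∀ j, 1 ≤ j → j < n + 1 → psum w j ≤ Δ} with hCset
  have hCmeas : MeasurableSet Cset := by
    rw [hCset, Set.setOf_forall]
    refine MeasurableSet.iInter fun j => ?_
    by_cases hc : 1 ≤ j ∧ j < n + 1
    · have : {w : Fin n → ℝ | 1 ≤ j → j < n + 1 → psum w j ≤ Δ} = {w | psum w j ≤ Δ} := by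
        ext w; simp [hc.1, hc.2]
      rw [this]
      exact measurableSet_le (measurable_psum j) measurable_const
    · have : {w : Fin n → ℝ | 1 ≤ j → j < n + 1 → psum w j ≤ Δ} = Set.univ := by
        ext w
        simp only [Set.mem_setOf_eq, Set.mem_univ, iff_true]
        intro h1 h2
        exact absurd ⟨h1, h2⟩ hc
      rw [this]
      exact MeasurableSet.univ
  suffices h : ∀ B : Set ℝ, MeasurableSet B →
      Measure.pi (fun _ : Fin (n + 1) => expMeasure lambda_h) (Dset Δ (n + 1) B)
        = (∫⁻ w in Cset, ENNReal.ofReal (rexp (-(lambda_h * (Δ - psum w n))))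
            ∂(Measure.pi (fun _ : Fin n => expMeasure lambda_h))) * expMeasure lambda_h B by
    rw [h A hA, h Set.univ MeasurableSet.univ, measure_univ, mul_one]
  intro B hB
  set E : Set (ℝ × (Fin n → ℝ)) :=
    {p | p.2 ∈ Cset ∧ (Δ - psum p.2 n) < p.1 ∧ p.1 - (Δ - psum p.2 n) ∈ B} with hE
  have hEmeas : MeasurableSet E := by
    refine (hCmeas.preimage measurable_snd).inter (MeasurableSet.inter ?_ ?_)
    · exact measurableSet_lt ((measurable_const.sub
        ((measurable_psum n).comp measurable_snd))) measurable_fst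
    · exact (measurable_fst.sub (measurable_const.sub
        ((measurable_psum n).comp measurable_snd))) hB
  have hDE : Dset Δ (n + 1) B =
      (MeasurableEquiv.piFinSuccAbove (fun _ : Fin (n + 1) => ℝ) (Fin.last n)) ⁻¹' E := by
    ext v
    have hev : (MeasurableEquiv.piFinSuccAbove (fun _ : Fin (n + 1) => ℝ) (Fin.last n)) v
        = (v (Fin.last n), fun j : Fin n => v ((Fin.last n).succAbove j)) := rfl
    have hsa : ∀ j : Fin n, (Fin.last n).succAbove j = j.castSucc := fun j =>
      Fin.succAbove_last_apply j
    simp only [Set.mem_preimage, hev, hE, Set.mem_setOf_eq, hCset, Dset]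
    have hw : (fun j : Fin n => v ((Fin.last n).succAbove j))
        = fun i : Fin n => v i.castSucc := by
      funext j; rw [hsa j]
    rw [hw]
    have hps : psum v (n + 1) = psum (fun i : Fin n => v i.castSucc) n + v (Fin.last n) :=
      psum_last v
    constructor
    · rintro ⟨h1, h2, h3⟩
      refine ⟨fun j hj1 hj2 => by rw [← psum_castSucc v (by omega)]; exact h2 j hj1 hj2, ?_, ?_⟩
      · rw [hps] at h1; linarith
      · have heq : v (Fin.last n) - (Δ - psum (fun i : Fin n => v i.castSucc) n)
            = psum v (n + 1) - Δ := by rw [hps]; ring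
        rw [heq]; exact h3
    · rintro ⟨h1, h2, h3⟩
      refine ⟨by rw [hps]; linarith, fun j hj1 hj2 => ?_, ?_⟩
      · rw [psum_castSucc v (by omega)]; exact h1 j hj1 hj2
      · have heq : psum v (n + 1) - Δ
            = v (Fin.last n) - (Δ - psum (fun i : Fin n => v i.castSucc) n) := by
          rw [hps]; ring
        rw [heq]; exact h3
  have hmp := MeasureTheory.measurePreserving_piFinSuccAbove
    (fun _ : Fin (n + 1) => expMeasure lambda_h) (Fin.last n)
  rw [hDE, hmp.measure_preimage hEmeas.nullMeasurableSet]
  rw [Measure.prod_apply_symm hEmeas]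
  have hslice : ∀ w : Fin n → ℝ, expMeasure lambda_h ((fun x => (x, w)) ⁻¹' E)
      = Set.indicator Cset
          (fun w => ENNReal.ofReal (rexp (-(lambda_h * (Δ - psum w n))))) w
        * expMeasure lambda_h B := by
    intro w
    by_cases hwC : w ∈ Cset
    · have ht : 0 ≤ Δ - psum w n := by
        rcases Nat.eq_zero_or_pos n with h0 | h0
        · subst h0
          rw [psum_zero]
          linarith
        · have := hwC n h0 (by omega)
          linarith
      have hset : (fun x => (x, w)) ⁻¹' E
          = {y | (Δ - psum w n) < y ∧ y - (Δ - psum w n) ∈ B} := by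
        ext y
        simp only [Set.mem_preimage, hE, Set.mem_setOf_eq]
        constructor
        · rintro ⟨_, h2, h3⟩; exact ⟨h2, h3⟩
        · rintro ⟨h2, h3⟩; exact ⟨hwC, h2, h3⟩
      rw [hset, expMeasure_memoryless hlh ht hB, Set.indicator_of_mem hwC]
    · have hset : (fun x => (x, w)) ⁻¹' E = ∅ := by
        ext y
        simp only [Set.mem_preimage, hE, Set.mem_setOf_eq, Set.mem_empty_iff_false, iff_false]
        rintro ⟨h1, _⟩
        exact hwC h1
      rw [hset, measure_empty, Set.indicator_of_notMem hwC, zero_mul]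
  rw [lintegral_congr hslice]
  have hfmeas : Measurable (fun w : Fin n → ℝ =>
      ENNReal.ofReal (rexp (-(lambda_h * (Δ - psum w n))))) :=
    (Real.measurable_exp.comp ((measurable_const.sub (measurable_psum n)).const_mul
      lambda_h).neg).ennreal_ofReal
  rw [lintegral_mul_const _ (hfmeas.indicator hCmeas)]
  rw [lintegral_indicator hCmeas]

end Core

section Main
variable {Ω : Type*} [MeasurableSpace Ω] {P : Measure Ω} [IsProbabilityMeasure P]
  {lambda_h Δ : ℝ} {Y : ℕ → Ω → ℝ}

lemma measurable_front (a b : ℕ) :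
    Measurable (fun v : Fin (a + b) → ℝ => fun j : Fin a => v (Fin.castAdd b j)) :=
  measurable_pi_lambda _ fun j => measurable_pi_apply _

lemma measurable_back (a b : ℕ) :
    Measurable (fun v : Fin (a + b) → ℝ => fun j : Fin b => v (Fin.natAdd a j)) :=
  measurable_pi_lambda _ fun j => measurable_pi_apply _

lemma vecY_split (m a b : ℕ) (D : Set (Fin a → ℝ)) (C : Set (Fin b → ℝ)) :
    vecY Y m a ⁻¹' D ∩ vecY Y (m + a) b ⁻¹' C
      = vecY Y m (a + b) ⁻¹'
          ((fun v (j : Fin a) => v (Fin.castAdd b j)) ⁻¹' D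
            ∩ (fun v (j : Fin b) => v (Fin.natAdd a j)) ⁻¹' C) := by
  ext ω
  simp only [Set.mem_inter_iff, Set.mem_preimage]
  have h1 : (fun j : Fin a => vecY Y m (a + b) ω (Fin.castAdd b j)) = vecY Y m a ω := by
    funext j
    simp [vecY]
  have h2 : (fun j : Fin b => vecY Y m (a + b) ω (Fin.natAdd a j)) = vecY Y (m + a) b ω := by
    funext j
    simp [vecY, add_assoc]
  rw [h1, h2]

lemma nuk_split (hlh : 0 < lambda_h) (hmeas : ∀ i, Measurable (Y i))
    (hdist : ∀ i, P.map (Y i) = expMeasure lambda_h)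
    (hindep : iIndepFun Y P) (a b : ℕ)
    {D : Set (Fin a → ℝ)} {C : Set (Fin b → ℝ)} (hD : MeasurableSet D) (hC : MeasurableSet C) :
    Measure.pi (fun _ : Fin (a + b) => expMeasure lambda_h)
        ((fun v (j : Fin a) => v (Fin.castAdd b j)) ⁻¹' D
          ∩ (fun v (j : Fin b) => v (Fin.natAdd a j)) ⁻¹' C)
      = Measure.pi (fun _ : Fin a => expMeasure lambda_h) D
        * Measure.pi (fun _ : Fin b => expMeasure lambda_h) C := by
  rw [← P_vecY hlh hmeas hdist hindep 0 (a + b)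
    (((measurable_front a b) hD).inter ((measurable_back a b) hC)),
    ← vecY_split 0 a b D C,
    (vecY_indep hmeas hindep b (le_refl (0 + a))).measure_inter_preimage_eq_mul _ _ hD hC,
    P_vecY hlh hmeas hdist hindep 0 a hD, P_vecY hlh hmeas hdist hindep (0 + a) b hC]

lemma measurableSet_Fev (hmeas : ∀ i, Measurable (Y i)) {A : ℕ → Set ℝ}
    (hA : ∀ e, MeasurableSet (A e)) (d m : ℕ) :
    MeasurableSet ((⋂ e ∈ Finset.range d, Xinc Y Δ e ⁻¹' A e)
      ∩ Nidx Y Δ d ⁻¹' {m} ∩ Gset Y) :=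
  ((MeasurableSet.biInter (Finset.range d).countable_toSet
      (fun e _ => (measurable_Xinc hmeas e) (hA e))).inter
    ((measurable_Nidx hmeas d) (measurableSet_singleton m))).inter (measurableSet_Gset hmeas)

lemma main_step (hlh : 0 < lambda_h) (hΔ : 0 ≤ Δ) (hmeas : ∀ i, Measurable (Y i))
    (hdist : ∀ i, P.map (Y i) = expMeasure lambda_h)
    (hindep : iIndepFun Y P)
    (A : ℕ → Set ℝ) (hA : ∀ e, MeasurableSet (A e)) (d : ℕ) :
    ∀ (m k : ℕ) (C : Set (Fin k → ℝ)), MeasurableSet C →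
      P ((⋂ e ∈ Finset.range d, Xinc Y Δ e ⁻¹' A e) ∩ Nidx Y Δ d ⁻¹' {m} ∩ Gset Y
          ∩ vecY Y m k ⁻¹' C)
        = P ((⋂ e ∈ Finset.range d, Xinc Y Δ e ⁻¹' A e) ∩ Nidx Y Δ d ⁻¹' {m} ∩ Gset Y)
          * Measure.pi (fun _ : Fin k => expMeasure lambda_h) C := by
  haveI : IsProbabilityMeasure (expMeasure lambda_h) := isProbabilityMeasure_expMeasure hlh
  have hGc : P (Gset Y)ᶜ = 0 := by
    rw [measure_compl (measurableSet_Gset hmeas) (measure_ne_top _ _),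
      Gset_ae_one hlh hmeas hdist hindep, measure_univ]
    simp
  induction d with
  | zero =>
    intro m k C hC
    by_cases hm : m = 1
    · subst hm
      have h0 : (⋂ e ∈ Finset.range 0, Xinc Y Δ e ⁻¹' A e) ∩ Nidx Y Δ 0 ⁻¹' {1} ∩ Gset Y
          = Gset Y := by
        ext ω
        simp [Nidx]
      rw [h0, Set.inter_comm (Gset Y), measure_inter_conull hGc,
        P_vecY hlh hmeas hdist hindep 1 k hC, Gset_ae_one hlh hmeas hdist hindep, one_mul]
    · have h0 : Nidx Y Δ 0 ⁻¹' {m} = (∅ : Set Ω) := by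
        ext ω
        simp only [Set.mem_preimage, Set.mem_singleton_iff, Set.mem_empty_iff_false, iff_false,
          Nidx]
        omega
      rw [h0]
      simp
  | succ d ih =>
    intro m' k C hC
    have key : ∀ (kk : ℕ) (CC : Set (Fin kk → ℝ)), MeasurableSet CC →
        P ((⋂ e ∈ Finset.range (d + 1), Xinc Y Δ e ⁻¹' A e) ∩ Nidx Y Δ (d + 1) ⁻¹' {m'}
            ∩ Gset Y ∩ vecY Y m' kk ⁻¹' CC)
          = (∑ m ∈ Finset.range m',
              P ((⋂ e ∈ Finset.range d, Xinc Y Δ e ⁻¹' A e) ∩ Nidx Y Δ d ⁻¹' {m} ∩ Gset Y)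
                * Measure.pi (fun _ : Fin (m' - m) => expMeasure lambda_h)
                    (Dset Δ (m' - m) (A d)))
            * Measure.pi (fun _ : Fin kk => expMeasure lambda_h) CC := by
      intro kk CC hCC
      have hdecomp : (⋂ e ∈ Finset.range (d + 1), Xinc Y Δ e ⁻¹' A e)
            ∩ Nidx Y Δ (d + 1) ⁻¹' {m'} ∩ Gset Y ∩ vecY Y m' kk ⁻¹' CC
          = ⋃ m ∈ Finset.range m',
              ((⋂ e ∈ Finset.range d, Xinc Y Δ e ⁻¹' A e) ∩ Nidx Y Δ d ⁻¹' {m} ∩ Gset Y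
                ∩ (vecY Y m (m' - m) ⁻¹' Dset Δ (m' - m) (A d)
                    ∩ vecY Y (m + (m' - m)) kk ⁻¹' CC)) := by
        ext ω
        simp only [Set.mem_inter_iff, Set.mem_iUnion, Set.mem_preimage, Set.mem_singleton_iff,
          Set.mem_iInter, Finset.mem_range]
        constructor
        · rintro ⟨⟨⟨hX, hN⟩, hG⟩, hW⟩
          set m := Nidx Y Δ d ω with hmdef
          obtain ⟨hK1, _, _⟩ := Kidx_spec hG hΔ m
          have hNsucc : Nidx Y Δ (d + 1) ω = m + Kidx Y Δ m ω := rfl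
          have hmm' : m < m' := by omega
          refine ⟨m, hmm', ⟨⟨fun e he => hX e (by omega), rfl⟩, hG⟩, ?_, ?_⟩
          · rw [vecY_mem_Dset_iff (by omega)]
            have hKeq : Kidx Y Δ m ω = m' - m := by omega
            refine ⟨hKeq, ?_⟩
            have hXd : Xinc Y Δ d ω ∈ A d := hX d (by omega)
            have : Xinc Y Δ d ω = Ssum Y m (m' - m) ω - Δ := by
              rw [Xinc, ← hmdef, hKeq]
            rwa [this] at hXd
          · have : m + (m' - m) = m' := by omega
            rwa [this]
        · rintro ⟨m, hmm', ⟨⟨⟨hX, hN⟩, hG⟩, hD, hW⟩⟩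
          have hDif := (vecY_mem_Dset_iff (by omega : 1 ≤ m' - m) (A d)).1 hD
          have hNsucc : Nidx Y Δ (d + 1) ω = Nidx Y Δ d ω + Kidx Y Δ (Nidx Y Δ d ω) ω := rfl
          have hN' : Nidx Y Δ (d + 1) ω = m' := by
            rw [hNsucc, hN, hDif.1]
            omega
          have hma : m + (m' - m) = m' := by omega
          refine ⟨⟨⟨fun e he => ?_, hN'⟩, hG⟩, by rwa [hma] at hW⟩
          rcases Nat.lt_or_ge e d with hed | hed
          · exact hX e hed
          · have hede : e = d := by omega
            subst hede
            have : Xinc Y Δ e ω = Ssum Y m (m' - m) ω - Δ := by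
              rw [Xinc, hN, hDif.1]
            rw [this]
            exact hDif.2
      rw [hdecomp]
      rw [measure_biUnion_finset ?hdisj ?hmeasu]
      case hdisj =>
        intro m1 h1 m2 h2 hne
        refine Set.disjoint_left.2 fun ω hω1 hω2 => hne ?_
        have e1 : Nidx Y Δ d ω = m1 := hω1.1.1.2
        have e2 : Nidx Y Δ d ω = m2 := hω2.1.1.2
        omega
      case hmeasu =>
        intro m hm
        exact (measurableSet_Fev hmeas hA d m).inter
          (((measurable_vecY hmeas m (m' - m)) (measurableSet_Dset (hA d))).inter
            ((measurable_vecY hmeas (m + (m' - m)) kk) hCC))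
      have hterm : ∀ m ∈ Finset.range m',
          P ((⋂ e ∈ Finset.range d, Xinc Y Δ e ⁻¹' A e) ∩ Nidx Y Δ d ⁻¹' {m} ∩ Gset Y
              ∩ (vecY Y m (m' - m) ⁻¹' Dset Δ (m' - m) (A d)
                  ∩ vecY Y (m + (m' - m)) kk ⁻¹' CC))
            = P ((⋂ e ∈ Finset.range d, Xinc Y Δ e ⁻¹' A e) ∩ Nidx Y Δ d ⁻¹' {m} ∩ Gset Y)
              * Measure.pi (fun _ : Fin (m' - m) => expMeasure lambda_h)
                  (Dset Δ (m' - m) (A d))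
              * Measure.pi (fun _ : Fin kk => expMeasure lambda_h) CC := by
        intro m hm
        rw [vecY_split m (m' - m) kk _ _]
        rw [ih m ((m' - m) + kk) _
          (((measurable_front (m' - m) kk) (measurableSet_Dset (hA d))).inter
            ((measurable_back (m' - m) kk) hCC))]
        rw [nuk_split hlh hmeas hdist hindep (m' - m) kk (measurableSet_Dset (hA d)) hCC]
        ring
      rw [Finset.sum_congr rfl hterm, Finset.sum_mul]
    rw [key k C hC]
    have huniv := key 0 Set.univ MeasurableSet.univ
    rw [Set.preimage_univ, Set.inter_univ, measure_univ, mul_one] at huniv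
    rw [huniv]

end Main

section Prod2
variable {Ω : Type*} [MeasurableSpace Ω] {P : Measure Ω} [IsProbabilityMeasure P]
  {lambda_h Δ : ℝ} {Y : ℕ → Ω → ℝ}

lemma decomp_formula (hlh : 0 < lambda_h) (hΔ : 0 ≤ Δ) (hmeas : ∀ i, Measurable (Y i))
    (hdist : ∀ i, P.map (Y i) = expMeasure lambda_h)
    (hindep : iIndepFun Y P)
    (A : ℕ → Set ℝ) (hA : ∀ e, MeasurableSet (A e)) (d : ℕ) :
    P ((⋂ e ∈ Finset.range (d + 1), Xinc Y Δ e ⁻¹' A e) ∩ Gset Y)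
      = P ((⋂ e ∈ Finset.range d, Xinc Y Δ e ⁻¹' A e) ∩ Gset Y)
        * ∑' k : ℕ, Measure.pi (fun _ : Fin (k + 1) => expMeasure lambda_h)
            (Dset Δ (k + 1) (A d)) := by
  haveI : IsProbabilityMeasure (expMeasure lambda_h) := isProbabilityMeasure_expMeasure hlh
  have hdecomp : (⋂ e ∈ Finset.range (d + 1), Xinc Y Δ e ⁻¹' A e) ∩ Gset Y
      = ⋃ m : ℕ, ⋃ k : ℕ,
          ((⋂ e ∈ Finset.range d, Xinc Y Δ e ⁻¹' A e) ∩ Nidx Y Δ d ⁻¹' {m} ∩ Gset Y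
            ∩ vecY Y m (k + 1) ⁻¹' Dset Δ (k + 1) (A d)) := by
    ext ω
    simp only [Set.mem_inter_iff, Set.mem_iUnion, Set.mem_iInter, Set.mem_preimage,
      Set.mem_singleton_iff, Finset.mem_range]
    constructor
    · rintro ⟨hX, hG⟩
      obtain ⟨hK1, _, _⟩ := Kidx_spec hG hΔ (Nidx Y Δ d ω)
      refine ⟨Nidx Y Δ d ω, Kidx Y Δ (Nidx Y Δ d ω) ω - 1,
        ⟨⟨fun e he => hX e (by omega), rfl⟩, hG⟩, ?_⟩
      rw [vecY_mem_Dset_iff (by omega)]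
      have hKeq : Kidx Y Δ (Nidx Y Δ d ω) ω - 1 + 1 = Kidx Y Δ (Nidx Y Δ d ω) ω := by omega
      rw [hKeq]
      refine ⟨rfl, ?_⟩
      have hXd := hX d (by omega)
      exact hXd
    · rintro ⟨m, k, ⟨⟨⟨hX, hN⟩, hG⟩, hD⟩⟩
      have hDif := (vecY_mem_Dset_iff (by omega : 1 ≤ k + 1) (A d)).1 hD
      refine ⟨fun e he => ?_, hG⟩
      rcases Nat.lt_or_ge e d with hed | hed
      · exact hX e hed
      · have hede : e = d := by omega
        subst hede
        have hXe : Xinc Y Δ e ω = Ssum Y m (k + 1) ω - Δ := by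
          rw [Xinc, hN, hDif.1]
        rw [hXe]
        exact hDif.2
  rw [hdecomp, measure_iUnion ?hd1 ?hm1]
  case hd1 =>
    intro m1 m2 hne
    refine Set.disjoint_left.2 fun ω hω1 hω2 => hne ?_
    simp only [Set.mem_iUnion] at hω1 hω2
    obtain ⟨k1, h1⟩ := hω1
    obtain ⟨k2, h2⟩ := hω2
    have e1 : Nidx Y Δ d ω = m1 := h1.1.1.2
    have e2 : Nidx Y Δ d ω = m2 := h2.1.1.2
    omega
  case hm1 =>
    intro m
    exact MeasurableSet.iUnion fun k => (measurableSet_Fev hmeas hA d m).inter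
      ((measurable_vecY hmeas m (k + 1)) (measurableSet_Dset (hA d)))
  have hinner : ∀ m : ℕ,
      P (⋃ k : ℕ, ((⋂ e ∈ Finset.range d, Xinc Y Δ e ⁻¹' A e) ∩ Nidx Y Δ d ⁻¹' {m} ∩ Gset Y
            ∩ vecY Y m (k + 1) ⁻¹' Dset Δ (k + 1) (A d)))
        = P ((⋂ e ∈ Finset.range d, Xinc Y Δ e ⁻¹' A e) ∩ Nidx Y Δ d ⁻¹' {m} ∩ Gset Y)
          * ∑' k : ℕ, Measure.pi (fun _ : Fin (k + 1) => expMeasure lambda_h)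
              (Dset Δ (k + 1) (A d)) := by
    intro m
    rw [measure_iUnion ?hd2 ?hm2]
    case hd2 =>
      intro k1 k2 hne
      refine Set.disjoint_left.2 fun ω hω1 hω2 => hne ?_
      have e1 := ((vecY_mem_Dset_iff (by omega : 1 ≤ k1 + 1) (A d)).1 hω1.2).1
      have e2 := ((vecY_mem_Dset_iff (by omega : 1 ≤ k2 + 1) (A d)).1 hω2.2).1
      omega
    case hm2 =>
      intro k
      exact (measurableSet_Fev hmeas hA d m).inter
        ((measurable_vecY hmeas m (k + 1)) (measurableSet_Dset (hA d)))
    rw [← ENNReal.tsum_mul_left]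
    refine tsum_congr fun k => ?_
    exact main_step hlh hΔ hmeas hdist hindep A hA d m (k + 1) _ (measurableSet_Dset (hA d))
  rw [tsum_congr hinner, ENNReal.tsum_mul_right]
  congr 1
  have hcover : (⋃ m : ℕ, ((⋂ e ∈ Finset.range d, Xinc Y Δ e ⁻¹' A e)
        ∩ Nidx Y Δ d ⁻¹' {m} ∩ Gset Y))
      = (⋂ e ∈ Finset.range d, Xinc Y Δ e ⁻¹' A e) ∩ Gset Y := by
    ext ω
    simp only [Set.mem_iUnion, Set.mem_inter_iff, Set.mem_preimage, Set.mem_singleton_iff]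
    constructor
    · rintro ⟨m, ⟨⟨hX, hN⟩, hG⟩⟩
      exact ⟨hX, hG⟩
    · rintro ⟨hX, hG⟩
      exact ⟨Nidx Y Δ d ω, ⟨⟨hX, rfl⟩, hG⟩⟩
  rw [← hcover, measure_iUnion ?hd3 ?hm3]
  case hd3 =>
    intro m1 m2 hne
    refine Set.disjoint_left.2 fun ω hω1 hω2 => hne ?_
    have e1 : Nidx Y Δ d ω = m1 := hω1.1.2
    have e2 : Nidx Y Δ d ω = m2 := hω2.1.2
    omega
  case hm3 =>
    intro m
    exact measurableSet_Fev hmeas hA d m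

lemma csum_univ_one (hlh : 0 < lambda_h) (hΔ : 0 ≤ Δ) (hmeas : ∀ i, Measurable (Y i))
    (hdist : ∀ i, P.map (Y i) = expMeasure lambda_h)
    (hindep : iIndepFun Y P) :
    (∑' k : ℕ, Measure.pi (fun _ : Fin (k + 1) => expMeasure lambda_h)
        (Dset Δ (k + 1) Set.univ)) = 1 := by
  have h := decomp_formula (P := P) hlh hΔ hmeas hdist hindep (fun _ => Set.univ)
    (fun _ => MeasurableSet.univ) 0
  simp only [Set.preimage_univ, Set.biInter_univ, Set.iInter_univ, Set.univ_inter,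
    Gset_ae_one hlh hmeas hdist hindep, one_mul] at h
  exact h.symm

lemma csum_eq (hlh : 0 < lambda_h) (hΔ : 0 ≤ Δ) (hmeas : ∀ i, Measurable (Y i))
    (hdist : ∀ i, P.map (Y i) = expMeasure lambda_h)
    (hindep : iIndepFun Y P)
    {A : Set ℝ} (hA : MeasurableSet A) :
    (∑' k : ℕ, Measure.pi (fun _ : Fin (k + 1) => expMeasure lambda_h)
        (Dset Δ (k + 1) A)) = expMeasure lambda_h A := by
  have h1 : ∀ k : ℕ, Measure.pi (fun _ : Fin (k + 1) => expMeasure lambda_h)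
      (Dset Δ (k + 1) A)
      = Measure.pi (fun _ : Fin (k + 1) => expMeasure lambda_h) (Dset Δ (k + 1) Set.univ)
        * expMeasure lambda_h A := fun k => core_Dset hlh hΔ (by omega) hA
  rw [tsum_congr h1, ENNReal.tsum_mul_right,
    csum_univ_one (P := P) hlh hΔ hmeas hdist hindep, one_mul]

lemma prod_formula (hlh : 0 < lambda_h) (hΔ : 0 ≤ Δ) (hmeas : ∀ i, Measurable (Y i))
    (hdist : ∀ i, P.map (Y i) = expMeasure lambda_h)
    (hindep : iIndepFun Y P)
    (A : ℕ → Set ℝ) (hA : ∀ e, MeasurableSet (A e)) (d : ℕ) :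
    P ((⋂ e ∈ Finset.range d, Xinc Y Δ e ⁻¹' A e) ∩ Gset Y)
      = ∏ e ∈ Finset.range d, expMeasure lambda_h (A e) := by
  induction d with
  | zero => simpa using Gset_ae_one hlh hmeas hdist hindep
  | succ d ih =>
    rw [decomp_formula hlh hΔ hmeas hdist hindep A hA d,
      csum_eq (P := P) hlh hΔ hmeas hdist hindep (hA d), ih, Finset.prod_range_succ]

end Prod2

/-- Let `T_1 = τ_1` and `T_{d+1} = min {τ_i : τ_i > T_d + Δ}` be the
depth-increase times of the fictitious honest tree. Then the increments
`(T_{d+1} − T_d − Δ)_{d ≥ 1}` form an i.i.d. sequence of exponential random variables with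
rate `λ_h`. -/
theorem honest_tree_increments_iid_exponential
    {Ω : Type*} [MeasurableSpace Ω] (P : Measure Ω) [IsProbabilityMeasure P]
    (lambda_h : ℝ) (hlh : 0 < lambda_h) (Δ : ℝ) (hΔ : 0 ≤ Δ)
    (Y : ℕ → Ω → ℝ)
    (hmeas : ∀ i, Measurable (Y i))
    (hdist : ∀ i, P.map (Y i) = expMeasure lambda_h)
    (hindep : iIndepFun Y P)
    (T : ℕ → Ω → ℝ)
    (hT1 : ∀ ω, T 1 ω = tau Y 1 ω)
    (hTrec : ∀ d : ℕ, 1 ≤ d → ∀ ω,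
      T (d + 1) ω = sInf {x : ℝ | ∃ i : ℕ, 1 ≤ i ∧ x = tau Y i ω ∧ T d ω + Δ < x}) :
    iIndepFun
        (fun (d : ℕ) (ω : Ω) => T (d + 2) ω - T (d + 1) ω - Δ) P ∧
      ∀ d : ℕ, P.map (fun ω => T (d + 2) ω - T (d + 1) ω - Δ) = expMeasure lambda_h := by
  classical
  haveI : IsProbabilityMeasure (expMeasure lambda_h) := isProbabilityMeasure_expMeasure hlh
  have hGc : P (Gset Y)ᶜ = 0 := by
    rw [measure_compl (measurableSet_Gset hmeas) (measure_ne_top _ _),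
      Gset_ae_one hlh hmeas hdist hindep, measure_univ]
    simp
  have hGae : ∀ᵐ ω ∂P, ω ∈ Gset Y := by
    rw [ae_iff]
    exact hGc
  have hae : ∀ d : ℕ, (fun ω => T (d + 2) ω - T (d + 1) ω - Δ) =ᵐ[P] Xinc Y Δ d := by
    intro d
    filter_upwards [hGae] with ω hω
    exact Xinc_eq_T hT1 hTrec hΔ hω d
  have hsingle : ∀ d : ℕ, ∀ B : Set ℝ, MeasurableSet B →
      P (Xinc Y Δ d ⁻¹' B) = expMeasure lambda_h B := by
    intro d B hB
    set A : ℕ → Set ℝ := fun e => if e = d then B else Set.univ with hAdef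
    have hA : ∀ e, MeasurableSet (A e) := fun e => by
      rw [hAdef]
      by_cases h : e = d
      · simp only [if_pos h]; exact hB
      · simp only [if_neg h]; exact MeasurableSet.univ
    have h1 := prod_formula hlh hΔ hmeas hdist hindep A hA (d + 1)
    have h2 : (⋂ e ∈ Finset.range (d + 1), Xinc Y Δ e ⁻¹' A e) = Xinc Y Δ d ⁻¹' B := by
      ext ω
      simp only [Set.mem_iInter, Finset.mem_range, Set.mem_preimage]
      constructor
      · intro h
        have hh := h d (by omega)
        rw [hAdef] at hh
        simpa using hh
      · intro h e he
        rw [hAdef]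
        by_cases hed : e = d
        · subst hed; simpa using h
        · simp [hed]
    have h3 : ∏ e ∈ Finset.range (d + 1), expMeasure lambda_h (A e)
        = expMeasure lambda_h B := by
      rw [Finset.prod_range_succ, hAdef]
      have hone : ∀ e ∈ Finset.range d,
          expMeasure lambda_h (if e = d then B else Set.univ) = 1 := by
        intro e he
        have hne : e ≠ d := by
          have := Finset.mem_range.1 he
          omega
        simp [hne]
      rw [Finset.prod_eq_one hone, one_mul]
      simp
    rw [h2, measure_inter_conull hGc] at h1
    rw [h1, h3]
  have hmap : ∀ d : ℕ, P.map (fun ω => T (d + 2) ω - T (d + 1) ω - Δ)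
      = expMeasure lambda_h := by
    intro d
    rw [Measure.map_congr (hae d)]
    refine Measure.ext fun B hB => ?_
    rw [Measure.map_apply (measurable_Xinc hmeas d) hB]
    exact hsingle d B hB
  refine ⟨?_, hmap⟩
  rw [iIndepFun_iff_measure_inter_preimage_eq_mul]
  intro S sets hsets
  set d := (S.sup id) + 1 with hd
  have hsub : S ⊆ Finset.range d := by
    intro i hi
    rw [Finset.mem_range, hd]
    have := Finset.le_sup (f := id) hi
    simp only [id_eq] at this
    omega
  set A : ℕ → Set ℝ := fun e => if e ∈ S then sets e else Set.univ with hAdef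
  have hA : ∀ e, MeasurableSet (A e) := fun e => by
    rw [hAdef]
    by_cases h : e ∈ S
    · simp only [if_pos h]; exact hsets e h
    · simp only [if_neg h]; exact MeasurableSet.univ
  have hseteq : (⋂ i ∈ S, (fun ω => T (i + 2) ω - T (i + 1) ω - Δ) ⁻¹' sets i) ∩ Gset Y
      = (⋂ e ∈ Finset.range d, Xinc Y Δ e ⁻¹' A e) ∩ Gset Y := by
    ext ω
    simp only [Set.mem_inter_iff, Set.mem_iInter, Set.mem_preimage, Finset.mem_range]
    constructor
    · rintro ⟨hS, hG⟩
      refine ⟨fun e he => ?_, hG⟩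
      rw [hAdef]
      by_cases heS : e ∈ S
      · simp only [if_pos heS]
        have hh := hS e heS
        rwa [Xinc_eq_T hT1 hTrec hΔ hG e] at hh
      · simp only [if_neg heS]
        trivial
    · rintro ⟨hR, hG⟩
      refine ⟨fun i hiS => ?_, hG⟩
      have hid : i < d := Finset.mem_range.1 (hsub hiS)
      have hh := hR i hid
      rw [hAdef] at hh
      simp only [if_pos hiS] at hh
      rw [← Xinc_eq_T hT1 hTrec hΔ hG i] at hh
      exact hh
  have hLHS : P (⋂ i ∈ S, (fun ω => T (i + 2) ω - T (i + 1) ω - Δ) ⁻¹' sets i)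
      = P ((⋂ e ∈ Finset.range d, Xinc Y Δ e ⁻¹' A e) ∩ Gset Y) := by
    rw [← hseteq, measure_inter_conull hGc]
  rw [hLHS, prod_formula hlh hΔ hmeas hdist hindep A hA d]
  have hprod : ∏ e ∈ Finset.range d, expMeasure lambda_h (A e)
      = ∏ i ∈ S, expMeasure lambda_h (sets i) := by
    calc ∏ e ∈ Finset.range d, expMeasure lambda_h (A e)
        = ∏ i ∈ S, expMeasure lambda_h (A i) := by
          refine (Finset.prod_subset hsub fun x _ hxS => ?_).symm
          rw [hAdef]
          simp [hxS]
      _ = ∏ i ∈ S, expMeasure lambda_h (sets i) := by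
          refine Finset.prod_congr rfl fun i hi => ?_
          rw [hAdef]
          simp [hi]
  rw [hprod]
  refine Finset.prod_congr rfl fun i hi => ?_
  have haem : AEMeasurable (fun ω => T (i + 2) ω - T (i + 1) ω - Δ) P :=
    ((measurable_Xinc hmeas i).aemeasurable).congr (hae i).symm
  rw [← Measure.map_apply_of_aemeasurable haem (hsets i hi), hmap i]
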